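/- With p as above (additive Gaussian noise model in topological order), if l = d is the last node (a leaf, i.e., no f_i with i > l depends on x_l through the sum), then s_l(x) = −(x_l − f_l(x))/σ_l² and consequently ∂s_l/∂x_l (x) = −1/σ_l² is constant in x. -/

import Mathlib

open Real Finset

/-- The density of the nonlinear additive Gaussian noise model in topological order. -/
noncomputable def anmDensity (d : ℕ) (f : Fin d → (Fin d → ℝ) → ℝ)
    (σ : Fin d → ℝ) (x : Fin d → ℝ) : ℝ :=
  ∏ i : Fin d, (Real.sqrt (2 * π * (σ i) ^ 2))⁻¹ *
    Real.exp (-(x i - f i x) ^ 2 / (2 * (σ i) ^ 2))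

theorem leaf_score_and_constant_diagonal
    (d : ℕ) (f : Fin (d + 1) → (Fin (d + 1) → ℝ) → ℝ) (σ : Fin (d + 1) → ℝ)
    (hσ : ∀ i, 0 < σ i)
    (hdep : ∀ (i : Fin (d + 1)) (x y : Fin (d + 1) → ℝ),
      (∀ k : Fin (d + 1), k < i → x k = y k) → f i x = f i y)
    (hdiff : ∀ i : Fin (d + 1), Differentiable ℝ (f i)) :
    ∀ x : Fin (d + 1) → ℝ,
      -- the score at the leaf l = d (last node) is  s_l(x) = -(x_l - f_l(x))/σ_l²
      HasDerivAt
        (fun t : ℝ => Real.log (anmDensity (d + 1) f σ (Function.update x (Fin.last d) t)))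
        (-(x (Fin.last d) - f (Fin.last d) x) / (σ (Fin.last d)) ^ 2)
        (x (Fin.last d)) ∧
      -- consequently ∂s_l/∂x_l is the constant -1/σ_l²
      HasDerivAt
        (fun t : ℝ =>
          -(t - f (Fin.last d) (Function.update x (Fin.last d) t)) / (σ (Fin.last d)) ^ 2)
        (-1 / (σ (Fin.last d)) ^ 2)
        (x (Fin.last d)) := by
  intro x
  set l : Fin (d + 1) := Fin.last d with hl
  have hσl : 0 < σ l := hσ l
  have hσl2 : (σ l) ^ 2 ≠ 0 := pow_ne_zero _ (ne_of_gt hσl)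
  -- updating the last coordinate does not change f i, for any i
  have hf : ∀ (i : Fin (d + 1)) (t : ℝ), f i (Function.update x l t) = f i x := by
    intro i t
    apply hdep
    intro k hk
    exact Function.update_of_ne (Fin.ne_of_lt (lt_of_lt_of_le hk (Fin.le_last i))) _ _
  set a : ℝ := f l x with ha
  have hsqrt_ne : ∀ i : Fin (d + 1), (Real.sqrt (2 * π * (σ i) ^ 2))⁻¹ ≠ 0 := by
    intro i
    apply inv_ne_zero
    apply ne_of_gt
    apply Real.sqrt_pos.mpr
    have := Real.pi_pos
    have := hσ i
    positivity
  -- the log-density as a function of t, explicitly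
  have key : ∀ t : ℝ, Real.log (anmDensity (d + 1) f σ (Function.update x l t))
      = (∑ i : Fin (d + 1), Real.log ((Real.sqrt (2 * π * (σ i) ^ 2))⁻¹))
        + ((∑ i ∈ Finset.univ.erase l, (-(x i - f i x) ^ 2 / (2 * (σ i) ^ 2)))
          + (-(t - a) ^ 2 / (2 * (σ l) ^ 2))) := by
    intro t
    unfold anmDensity
    rw [Real.log_prod]
    · have hterm : ∀ i : Fin (d + 1),
          Real.log ((Real.sqrt (2 * π * (σ i) ^ 2))⁻¹ *
            Real.exp (-(Function.update x l t i - f i (Function.update x l t)) ^ 2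
              / (2 * (σ i) ^ 2)))
          = Real.log ((Real.sqrt (2 * π * (σ i) ^ 2))⁻¹)
            + (-(Function.update x l t i - f i x) ^ 2 / (2 * (σ i) ^ 2)) := by
        intro i
        rw [hf, Real.log_mul (hsqrt_ne i) (Real.exp_ne_zero _), Real.log_exp]
      simp only [hterm]
      rw [Finset.sum_add_distrib]
      congr 1
      rw [← Finset.sum_erase_add _ _ (Finset.mem_univ l)]
      congr 1
      · apply Finset.sum_congr rfl
        intro i hi
        rw [Function.update_of_ne (Finset.ne_of_mem_erase hi)]
      · rw [Function.update_self]
    · intro i _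
      exact mul_ne_zero (hsqrt_ne i) (Real.exp_ne_zero _)
  constructor
  · have heq : (fun t : ℝ => Real.log (anmDensity (d + 1) f σ (Function.update x l t)))
        = fun t : ℝ => (∑ i : Fin (d + 1), Real.log ((Real.sqrt (2 * π * (σ i) ^ 2))⁻¹))
          + ((∑ i ∈ Finset.univ.erase l, (-(x i - f i x) ^ 2 / (2 * (σ i) ^ 2)))
            + (-(t - a) ^ 2 / (2 * (σ l) ^ 2))) := funext key
    rw [heq]
    have h1 : HasDerivAt (fun t : ℝ => -(t - a) ^ 2 / (2 * (σ l) ^ 2))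
        (-(x l - a) / (σ l) ^ 2) (x l) := by
      have h2 : HasDerivAt (fun t : ℝ => (t - a) ^ 2) (2 * (x l - a)) (x l) := by
        have := (((hasDerivAt_id (x l)).sub_const a).pow 2)
        convert this using 1
        rfl; rfl; rfl
        simp only [id_eq]
        ring
      have h3 := (h2.neg).div_const (2 * (σ l) ^ 2)
      convert h3 using 1
      rfl; rfl; rfl
      field_simp
    exact (h1.const_add _).const_add _
  · have heq2 : (fun t : ℝ => -(t - f l (Function.update x l t)) / (σ l) ^ 2)
        = fun t : ℝ => -(t - a) / (σ l) ^ 2 := by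
      funext t; rw [hf]
    rw [heq2]
    have h1 := (((hasDerivAt_id (x l)).sub_const a).neg).div_const ((σ l) ^ 2)
    convert h1 using 1
    rfl; rfl; rfl
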